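/- Let k > 1 and n ≥ 1 be integers. Let m = ∏_{p | k} p^{v_p(n)} and N = n/m. Then the number of distinct irreducible factors of Φ_k(x^n) over ℚ equals τ(N), the number of positive divisors of N. -/

import Mathlib

open Polynomial

/-- Product over divisors of a coprime product splits as a double product. -/
private lemma aux_prod_divisors {M : Type*} [CommMonoid M] {m n : ℕ} (hmn : Nat.Coprime m n)
    (f : ℕ → M) :
    ∏ x ∈ (m * n).divisors, f x = ∏ d ∈ m.divisors, ∏ e ∈ n.divisors, f (d * e) := by
  rw [← Finset.prod_product']
  refine Finset.prod_nbij' (fun x => (x.gcd m, x.gcd n)) (fun p => p.1 * p.2)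
    ?_ ?_ ?_ ?_ ?_
  · intro x hx
    obtain ⟨hxd, hmn0⟩ := Nat.mem_divisors.mp hx
    exact Finset.mem_product.mpr ⟨Nat.mem_divisors.mpr ⟨Nat.gcd_dvd_right _ _,
      fun h => hmn0 (by simp [h])⟩, Nat.mem_divisors.mpr ⟨Nat.gcd_dvd_right _ _,
      fun h => hmn0 (by simp [h])⟩⟩
  · intro p hp
    obtain ⟨h1, h2⟩ := Finset.mem_product.mp hp
    obtain ⟨hd, hm0⟩ := Nat.mem_divisors.mp h1
    obtain ⟨he, hn0⟩ := Nat.mem_divisors.mp h2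
    exact Nat.mem_divisors.mpr ⟨mul_dvd_mul hd he, mul_ne_zero hm0 hn0⟩
  · intro x hx
    obtain ⟨hxd, hmn0⟩ := Nat.mem_divisors.mp hx
    exact (Nat.gcd_mul_gcd_eq_iff_dvd_mul_of_coprime hmn).mpr hxd
  · rintro ⟨d, e⟩ hp
    obtain ⟨h1, h2⟩ := Finset.mem_product.mp hp
    obtain ⟨hd, hm0⟩ := Nat.mem_divisors.mp h1
    obtain ⟨he, hn0⟩ := Nat.mem_divisors.mp h2
    have hem : Nat.Coprime e m := (Nat.Coprime.coprime_dvd_left he hmn.symm)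
    have hdn : Nat.Coprime d n := (Nat.Coprime.coprime_dvd_left hd hmn)
    have g1 : (d * e).gcd m = d := by
      rw [Nat.Coprime.gcd_mul_right_cancel d hem, Nat.gcd_eq_left hd]
    have g2 : (d * e).gcd n = e := by
      rw [mul_comm, Nat.Coprime.gcd_mul_right_cancel e hdn, Nat.gcd_eq_left he]
    simp [g1, g2]
  · intro x hx
    obtain ⟨hxd, hmn0⟩ := Nat.mem_divisors.mp hx
    simp only []
    rw [(Nat.gcd_mul_gcd_eq_iff_dvd_mul_of_coprime hmn).mpr hxd]

/-- If every prime of `s` divides `k`, then `expand s Φ_k = Φ_{ks}`. -/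
private lemma expand_cyclo_aux :
    ∀ s k : ℕ, 0 < k → 0 < s → (∀ p, p.Prime → p ∣ s → p ∣ k) →
      Polynomial.expand ℚ s (cyclotomic k ℚ) = cyclotomic (k * s) ℚ := by
  intro s
  induction s using Nat.strong_induction_on with
  | _ s ih =>
    intro k hk hs hp
    rcases eq_or_lt_of_le (Nat.succ_le_of_lt hs) with h1 | h1
    · rw [← h1]; simp
    · set p := s.minFac with hpdef
      have pp : p.Prime := Nat.minFac_prime (by omega)
      have hpd : p ∣ s := Nat.minFac_dvd s
      have hpk : p ∣ k := hp p pp hpd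
      have hsp : s / p * p = s := Nat.div_mul_cancel hpd
      have h2 : Polynomial.expand ℚ s (cyclotomic k ℚ)
          = Polynomial.expand ℚ (s / p) (Polynomial.expand ℚ p (cyclotomic k ℚ)) := by
        rw [Polynomial.expand_expand, hsp]
      rw [h2, cyclotomic_expand_eq_cyclotomic pp hpk,
        ih (s / p) (Nat.div_lt_self (by omega) pp.one_lt) (k * p)
          (Nat.mul_pos hk pp.pos) (Nat.div_pos (Nat.le_of_dvd hs hpd) pp.pos)
          (fun q hq hqd => ((hp q hq (hqd.trans (Nat.div_dvd_of_dvd hpd))).mul_right p))]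
      rw [mul_assoc, Nat.mul_div_cancel' hpd]

/-- `expand p^a Φ_j = ∏_{i ≤ a} Φ_{j p^i}` when `p ∤ j`. -/
private lemma expand_pow_cyclo {p j : ℕ} (pp : p.Prime) (hj : 0 < j) (hpj : ¬ p ∣ j) (a : ℕ) :
    Polynomial.expand ℚ (p ^ a) (cyclotomic j ℚ)
      = ∏ i ∈ Finset.range (a + 1), cyclotomic (j * p ^ i) ℚ := by
  induction a with
  | zero => simp
  | succ a ih =>
    have h2 : Polynomial.expand ℚ (p ^ (a + 1)) (cyclotomic j ℚ)
        = Polynomial.expand ℚ (p ^ a) (Polynomial.expand ℚ p (cyclotomic j ℚ)) := by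
      rw [Polynomial.expand_expand, ← pow_succ]
    rw [h2, cyclotomic_expand_eq_cyclotomic_mul pp hpj, map_mul, ih,
      expand_cyclo_aux (p ^ a) (j * p) (Nat.mul_pos hj pp.pos) (pow_pos pp.pos a)
        (fun q hq hqd => ((Nat.prime_dvd_prime_iff_eq hq pp).mp
          (hq.dvd_of_dvd_pow hqd)) ▸ dvd_mul_left p j),
      show j * p * p ^ a = j * p ^ (a + 1) by ring]
    simp only [Finset.prod_range_succ]
    ring

/-- `expand n Φ_j = ∏_{d ∣ n} Φ_{jd}` when `gcd(n, j) = 1`. -/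
private lemma expand_coprime_cyclo :
    ∀ n j : ℕ, 0 < j → 0 < n → Nat.Coprime n j →
      Polynomial.expand ℚ n (cyclotomic j ℚ) = ∏ d ∈ n.divisors, cyclotomic (j * d) ℚ := by
  intro n
  induction n using Nat.strong_induction_on with
  | _ n ih =>
    intro j hj hn hcop
    rcases eq_or_lt_of_le (Nat.succ_le_of_lt hn) with h1 | h1
    · rw [← h1]; simp
    · set p := n.minFac with hpdef
      have pp : p.Prime := Nat.minFac_prime (by omega)
      have hpd : p ∣ n := Nat.minFac_dvd n
      have hn0 : n ≠ 0 := by omega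
      set a := n.factorization p with hadef
      set t := n / p ^ a with htdef
      have ha : 0 < a := pp.factorization_pos_of_dvd hn0 hpd
      have hpa : p ^ a ∣ n := Nat.ordProj_dvd n p
      have hnt : p ^ a * t = n := Nat.ordProj_mul_ordCompl_eq_self n p
      have hpt : ¬ p ∣ t := Nat.not_dvd_ordCompl pp hn0
      have ht0 : 0 < t := Nat.ordCompl_pos p hn0
      have htn : t < n := by
        have hpa1 : 1 < p ^ a := by
          calc 1 < p := pp.one_lt
          _ ≤ p ^ a := Nat.le_self_pow (by omega) p
        calc t < p ^ a * t := by nlinarith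
        _ = n := hnt
      have hpj : ¬ p ∣ j := (Nat.Prime.coprime_iff_not_dvd pp).mp
        (Nat.Coprime.coprime_dvd_left hpd hcop)
      have htj : Nat.Coprime t j := Nat.Coprime.coprime_dvd_left (Dvd.intro_left _ hnt) hcop
      have htp : Nat.Coprime t p := ((Nat.Prime.coprime_iff_not_dvd pp).mpr hpt).symm
      have h2 : Polynomial.expand ℚ n (cyclotomic j ℚ)
          = Polynomial.expand ℚ t (Polynomial.expand ℚ (p ^ a) (cyclotomic j ℚ)) := by
        rw [Polynomial.expand_expand, mul_comm, hnt]
      rw [h2, expand_pow_cyclo pp hj hpj, map_prod, ← hnt,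
        aux_prod_divisors (Nat.Coprime.pow_left a htp.symm) (fun d => cyclotomic (j * d) ℚ),
        Nat.prod_divisors_prime_pow pp]
      refine Finset.prod_congr rfl fun i hi => ?_
      rw [ih t htn (j * p ^ i) (Nat.mul_pos hj (pow_pos pp.pos i)) ht0
        (Nat.Coprime.mul_right htj (Nat.Coprime.pow_right i htp))]
      exact Finset.prod_congr rfl fun e he => by rw [mul_assoc]

private lemma expand_eq_prod (k n m : ℕ) (hk : 1 < k) (hn : 1 ≤ n)
    (hm : m = ∏ p ∈ k.primeFactors, p ^ (n.factorization p)) :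
    Polynomial.expand ℚ n (cyclotomic k ℚ)
      = ∏ d ∈ (n / m).divisors, cyclotomic (k * m * d) ℚ := by
  have hn0 : n ≠ 0 := by omega
  have hk0 : k ≠ 0 := by omega
  have hm0 : 0 < m := by
    rw [hm]
    exact Finset.prod_pos fun p hp => pow_pos (Nat.prime_of_mem_primeFactors hp).pos _
  have hmk : ∀ q, q.Prime → q ∣ m → q ∣ k := by
    intro q hq hqm
    rw [hm] at hqm
    obtain ⟨p, hp, hpd⟩ := hq.prime.exists_mem_finset_dvd hqm
    have hqp : q = p := (Nat.prime_dvd_prime_iff_eq hq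
      (Nat.prime_of_mem_primeFactors hp)).mp (hq.dvd_of_dvd_pow hpd)
    exact hqp ▸ Nat.dvd_of_mem_primeFactors hp
  have hmdvd : m ∣ n := by
    have h1 : m = ∏ p ∈ k.primeFactors ∩ n.primeFactors, p ^ n.factorization p := by
      rw [hm]
      refine (Finset.prod_subset Finset.inter_subset_left ?_).symm
      intro p hp hnp
      have hpn : ¬ p ∣ n := by
        intro hdvd
        exact hnp (Finset.mem_inter.mpr ⟨hp, Nat.mem_primeFactors.mpr
          ⟨Nat.prime_of_mem_primeFactors hp, hdvd, hn0⟩⟩)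
      rw [Nat.factorization_eq_zero_of_not_dvd hpn, pow_zero]
    have h2 : ∏ p ∈ n.primeFactors, p ^ n.factorization p = n := by
      rw [← Nat.support_factorization]
      exact Nat.factorization_prod_pow_eq_self hn0
    calc m = ∏ p ∈ k.primeFactors ∩ n.primeFactors, p ^ n.factorization p := h1
      _ ∣ ∏ p ∈ n.primeFactors, p ^ n.factorization p :=
        Finset.prod_dvd_prod_of_subset _ _ _ Finset.inter_subset_right
      _ = n := h2
  have hmfact : ∀ q ∈ k.primeFactors, m.factorization q = n.factorization q := by
    intro q hq
    rw [hm, Nat.factorization_prod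
      (fun p hp => pow_ne_zero _ (Nat.prime_of_mem_primeFactors hp).pos.ne')]
    rw [Finset.sum_apply']
    have : ∀ p ∈ k.primeFactors,
        ((p ^ n.factorization p).factorization) q
          = if p = q then n.factorization p else 0 := by
      intro p hp
      rw [(Nat.prime_of_mem_primeFactors hp).factorization_pow, Finsupp.single_apply]
    rw [Finset.sum_congr rfl this, Finset.sum_ite_eq' k.primeFactors q]
    simp [hq]
  set N := n / m with hNdef
  have hN0 : 0 < N := Nat.div_pos (Nat.le_of_dvd (by omega) hmdvd) hm0
  have hNk : ∀ q, q.Prime → q ∣ N → ¬ q ∣ k := by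
    intro q hq hqN hqk
    have h3 : N.factorization q = 0 := by
      rw [hNdef, Nat.factorization_div hmdvd]
      simp [hmfact q (Nat.mem_primeFactors.mpr ⟨hq, hqk, hk0⟩)]
    exact (hq.factorization_pos_of_dvd hN0.ne' hqN).ne' h3
  have hcop : Nat.Coprime N (k * m) := by
    by_contra h
    have hq := Nat.minFac_prime (n := N.gcd (k * m)) h
    have hqN : (N.gcd (k * m)).minFac ∣ N :=
      (Nat.minFac_dvd _).trans (Nat.gcd_dvd_left _ _)
    have hqkm : (N.gcd (k * m)).minFac ∣ k * m :=
      (Nat.minFac_dvd _).trans (Nat.gcd_dvd_right _ _)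
    rcases (Nat.Prime.dvd_mul hq).mp hqkm with h4 | h4
    · exact hNk _ hq hqN h4
    · exact hNk _ hq hqN (hmk _ hq h4)
  have hsplit : Polynomial.expand ℚ n (cyclotomic k ℚ)
      = Polynomial.expand ℚ N (Polynomial.expand ℚ m (cyclotomic k ℚ)) := by
    rw [Polynomial.expand_expand, Nat.div_mul_cancel hmdvd]
  rw [hsplit, expand_cyclo_aux m k (by omega) hm0 hmk,
    expand_coprime_cyclo N (k * m) (Nat.mul_pos (by omega) hm0) hN0 hcop]

private lemma nf_prod {s : Finset ℕ} {f : ℕ → ℚ[X]}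
    (h : ∀ d ∈ s, (f d).Monic ∧ Irreducible (f d)) :
    UniqueFactorizationMonoid.normalizedFactors (∏ d ∈ s, f d) = s.val.map f := by
  classical
  induction s using Finset.induction_on with
  | empty => simp
  | @insert a s ha ih =>
    have hfa := h a (Finset.mem_insert_self a s)
    have hrest : ∀ d ∈ s, (f d).Monic ∧ Irreducible (f d) :=
      fun d hd => h d (Finset.mem_insert_of_mem hd)
    have hprodm : (∏ d ∈ s, f d).Monic :=
      monic_prod_of_monic _ _ fun d hd => (hrest d hd).1
    rw [Finset.prod_insert ha,
      UniqueFactorizationMonoid.normalizedFactors_mul hfa.1.ne_zero hprodm.ne_zero,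
      UniqueFactorizationMonoid.normalizedFactors_irreducible hfa.2,
      hfa.1.normalize_eq_self, ih hrest, Finset.insert_val_of_notMem ha,
      Multiset.map_cons, Multiset.singleton_add]

theorem card_irreducible_factors_cyclotomic_comp_X_pow
    (k n m N : ℕ) (hk : 1 < k) (hn : 1 ≤ n)
    (hm : m = ∏ p ∈ k.primeFactors, p ^ (n.factorization p))
    (hN : N = n / m) :
    (UniqueFactorizationMonoid.normalizedFactors
        ((cyclotomic k ℚ).comp (X ^ n))).toFinset.card = N.divisors.card := by
  have hm0 : 0 < m := by
    rw [hm]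
    exact Finset.prod_pos fun p hp => pow_pos (Nat.prime_of_mem_primeFactors hp).pos _
  have hkm0 : 0 < k * m := Nat.mul_pos (by omega) hm0
  subst hN
  rw [← Polynomial.expand_eq_comp_X_pow, expand_eq_prod k n m hk hn hm]
  have hmono : ∀ d ∈ (n / m).divisors,
      (cyclotomic (k * m * d) ℚ).Monic ∧ Irreducible (cyclotomic (k * m * d) ℚ) := by
    intro d hd
    have hd0 : 0 < d := Nat.pos_of_mem_divisors hd
    exact ⟨cyclotomic.monic _ _, cyclotomic.irreducible_rat (Nat.mul_pos hkm0 hd0)⟩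
  rw [nf_prod hmono, Multiset.toFinset_map, Finset.val_toFinset,
    Finset.card_image_of_injOn]
  intro d _ e _ hde
  have := cyclotomic_injective (R := ℚ) hde
  exact Nat.eq_of_mul_eq_mul_left hkm0 (by simpa using this)
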